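/- Let F be a linearly ordered field and let S be a finite set of n ≥ 1 points in F². Let 𝓛 be the finite set of all lines of F² passing through at least two points of S, each line L ∈ 𝓛 given as the zero set of an affine function f_L. Then the number of sign vectors ε : 𝓛 → {−1,+1} for which the set {x ∈ F² : ε(L)·f_L(x) > 0 for all L ∈ 𝓛} is nonempty is at most (n⁴ − 2n³ + 3n² − 2n + 8)/8. (A set of lines generated by n points in the plane has at most (n⁴ − 2n³ + 3n² − 2n + 8)/8 regions.) -/

import Mathlib

/-- The affine functional `p ↦ a i * p.1 + b i * p.2 - c i` cutting out the `i`-th line. -/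
def arrLine {F : Type*} [Field F] [LinearOrder F] [IsStrictOrderedRing F] {m : ℕ} (a b c : Fin m → F)
    (i : Fin m) (p : F × F) : F :=
  a i * p.1 + b i * p.2 - c i

/-- The open region of the family of lines associated to the sign vector `ε`
(`true ↦ +1`, `false ↦ -1`). -/
def arrRegion {F : Type*} [Field F] [LinearOrder F] [IsStrictOrderedRing F] {m : ℕ} (a b c : Fin m → F)
    (ε : Fin m → Bool) : Set (F × F) :=
  {p : F × F | ∀ i : Fin m, 0 < (if ε i then (1 : F) else -1) * arrLine a b c i p}

section
variable {F : Type*} [Field F] [LinearOrder F] [IsStrictOrderedRing F]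

/-- Generic strict-sign region of a family of functions. -/
def sregion {X : Type*} {k : ℕ} (g : Fin k → X → F) (ε : Fin k → Bool) : Set X :=
  {x | ∀ j, 0 < (if ε j then (1:F) else -1) * g j x}

/-- Number of nonempty regions. -/
noncomputable def Ncard {X : Type*} {k : ℕ} (g : Fin k → X → F) : ℕ :=
  Nat.card {ε : Fin k → Bool // (sregion g ε).Nonempty}

lemma convex_pos_affine {X : Type*} [AddCommGroup X] [Module F X] (f : X → F)
    (hf : ∀ (u : F) (x y : X), f ((1-u) • x + u • y) = (1-u) * f x + u * f y) :
    Convex F {x | 0 < f x} := by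
  intro x hx y hy p q hp hq hpq
  have hxp : (0:F) < f x := hx
  have hyp : (0:F) < f y := hy
  have hpe : p = 1 - q := by linarith
  have : f (p • x + q • y) = p * f x + q * f y := by
    rw [hpe]; exact hf q x y
  simp only [Set.mem_setOf_eq, this]
  rcases eq_or_lt_of_le hq with h | h
  · have : p = 1 := by linarith
    simp [← h, this]; linarith
  · have h1 : 0 < q * f y := mul_pos h hyp
    have h2 : 0 ≤ p * f x := mul_nonneg hp hxp.le
    linarith

lemma convex_sregion {X : Type*} [AddCommGroup X] [Module F X] {k : ℕ} (g : Fin k → X → F)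
    (hg : ∀ j (u : F) (x y : X), g j ((1-u) • x + u • y) = (1-u) * g j x + u * g j y)
    (ε : Fin k → Bool) : Convex F (sregion g ε) := by
  have : sregion g ε = ⋂ j, {x | 0 < (if ε j then (1:F) else -1) * g j x} := by
    ext x; simp [sregion, Set.mem_iInter]
  rw [this]
  refine convex_iInter fun j => convex_pos_affine _ fun u x y => ?_
  rw [hg j u x y]; ring

lemma exists_zero_of_convex {X : Type*} [AddCommGroup X] [Module F X] {C : Set X}
    (hC : Convex F C) (f : X → F)
    (hf : ∀ (u : F) (x y : X), f ((1-u) • x + u • y) = (1-u) * f x + u * f y)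
    {x y : X} (hx : x ∈ C) (hy : y ∈ C) (h1 : 0 < f x) (h2 : f y < 0) :
    ∃ z ∈ C, f z = 0 := by
  have hd : (0:F) < f x - f y := by linarith
  set u : F := f x / (f x - f y) with hu
  have hu0 : 0 ≤ u := div_nonneg h1.le hd.le
  have hu1 : u ≤ 1 := (div_le_one hd).mpr (by linarith)
  refine ⟨(1-u) • x + u • y, hC hx hy (by linarith) hu0 (by ring), ?_⟩
  rw [hf u x y]
  field_simp [hu]
  linear_combination (-1 : F) * (div_mul_cancel₀ (f x) hd.ne' : u * (f x - f y) = f x)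


lemma card_le_aux {δ γ : Type*} [DecidableEq γ] (A : Finset δ) (G S : Finset γ)
    (f1 : δ → Bool) (f2 : δ → γ)
    (hinj : ∀ x ∈ A, ∀ y ∈ A, f1 x = f1 y → f2 x = f2 y → x = y)
    (hres : ∀ x ∈ A, f2 x ∈ G)
    (hsplit : ∀ x ∈ A, ∀ y ∈ A, f2 x = f2 y → f1 x ≠ f1 y → f2 x ∈ S) :
    A.card ≤ G.card + S.card := by
  classical
  rw [Finset.card_eq_sum_card_fiberwise hres]
  have hbound : ∀ g ∈ G, (A.filter fun x => f2 x = g).card ≤ if g ∈ S then 2 else 1 := by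
    intro g hg
    by_cases hgS : g ∈ S
    · simp only [hgS, if_true]
      have : (A.filter fun x => f2 x = g).card ≤ (Finset.univ : Finset Bool).card := by
        apply Finset.card_le_card_of_injOn f1 (fun x _ => Finset.mem_univ _)
        intro x hx y hy hxy
        simp only [Finset.mem_coe, Finset.mem_filter] at hx hy
        exact hinj x hx.1 y hy.1 hxy (hx.2.trans hy.2.symm)
      simpa using this
    · simp only [hgS, if_false]
      apply Finset.card_le_one.mpr
      intro x hx y hy
      simp only [Finset.mem_filter] at hx hy
      have hf2 : f2 x = f2 y := hx.2.trans hy.2.symm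
      by_cases h1 : f1 x = f1 y
      · exact hinj x hx.1 y hy.1 h1 hf2
      · exact absurd (hx.2 ▸ hsplit x hx.1 y hy.1 hf2 h1) hgS
  calc (∑ g ∈ G, (A.filter fun x => f2 x = g).card)
      ≤ ∑ g ∈ G, (if g ∈ S then 2 else 1) := Finset.sum_le_sum hbound
    _ = ∑ g ∈ G, (1 + if g ∈ S then 1 else 0) := by
        apply Finset.sum_congr rfl; intro g _; by_cases h : g ∈ S <;> simp [h]
    _ = G.card + (G ∩ S).card := by
        rw [Finset.sum_add_distrib]; simp [Finset.sum_boole, Finset.filter_mem_eq_inter]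
    _ ≤ G.card + S.card := by
        exact Nat.add_le_add_left (Finset.card_le_card Finset.inter_subset_right) _

lemma natCard_subtype_eq_filter {γ : Type*} [Fintype γ] [DecidableEq γ] (P : γ → Prop)
    [DecidablePred P] : Nat.card {x // P x} = (Finset.univ.filter P).card := by
  rw [Nat.card_eq_fintype_card, Fintype.card_subtype]

lemma natCard_subtype_mono {γ : Type*} [Fintype γ] {P Q : γ → Prop} (h : ∀ x, P x → Q x) :
    Nat.card {x // P x} ≤ Nat.card {x // Q x} := by
  classical
  rw [natCard_subtype_eq_filter P, natCard_subtype_eq_filter Q]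
  apply Finset.card_le_card
  intro x hx
  simp only [Finset.mem_filter, Finset.mem_univ, true_and] at *
  exact h x hx

lemma Ncard_succ {X : Type*} {k : ℕ} (g : Fin (k+1) → X → F) :
    Ncard g ≤ Ncard (fun j => g j.succ) +
      Nat.card {ε : Fin k → Bool // ∃ x ∈ sregion (fun j => g j.succ) ε,
        ∃ y ∈ sregion (fun j => g j.succ) ε, 0 < g 0 x ∧ g 0 y < 0} := by
  classical
  unfold Ncard
  rw [natCard_subtype_eq_filter, natCard_subtype_eq_filter, natCard_subtype_eq_filter]
  apply card_le_aux _ _ _ (fun ε => ε 0) (fun ε j => ε j.succ)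
  · intro x _ y _ h0 hs
    funext i
    refine Fin.cases h0 (fun j => ?_) i
    exact congrFun hs j
  · intro ε hε
    simp only [Finset.mem_filter, Finset.mem_univ, true_and] at hε ⊢
    obtain ⟨x, hx⟩ := hε
    exact ⟨x, fun j => hx j.succ⟩
  · intro ε hε ε' hε' hres hne
    simp only [Finset.mem_filter, Finset.mem_univ, true_and] at hε hε' ⊢
    obtain ⟨x, hx⟩ := hε
    obtain ⟨y, hy⟩ := hε'
    have hxr : x ∈ sregion (fun j => g j.succ) (fun j => ε j.succ) := fun j => hx j.succ
    have hyr : y ∈ sregion (fun j => g j.succ) (fun j => ε j.succ) := by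
      intro j
      have := hy j.succ
      rwa [← congrFun hres j] at this
    have hx0 := hx 0
    have hy0 := hy 0
    rcases Bool.eq_false_or_eq_true (ε 0) with h | h
    · have h' : ε' 0 = false := by
        rcases Bool.eq_false_or_eq_true (ε' 0) with h2 | h2
        · exact absurd (h.trans h2.symm) hne
        · exact h2
      rw [h] at hx0; rw [h'] at hy0
      simp at hx0 hy0
      exact ⟨x, hxr, y, hyr, hx0, hy0⟩
    · have h' : ε' 0 = true := by
        rcases Bool.eq_false_or_eq_true (ε' 0) with h2 | h2
        · exact h2
        · exact absurd (h.trans h2.symm) hne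
      rw [h] at hx0; rw [h'] at hy0
      simp at hx0 hy0
      exact ⟨y, hyr, x, hxr, hy0, hx0⟩


/-- 1-D: the number of nonempty strict sign regions of `k` affine functions on `F`
is at most `k+1`. -/
lemma Ncard_affine_le : ∀ (k : ℕ) (g : Fin k → F → F),
    (∀ j, ∃ α β : F, ∀ t, g j t = α * t + β) → Ncard g ≤ k + 1 := by
  intro k
  induction k with
  | zero =>
    intro g _
    unfold Ncard
    classical
    calc Nat.card {ε : Fin 0 → Bool // (sregion g ε).Nonempty}
        = Fintype.card {ε : Fin 0 → Bool // (sregion g ε).Nonempty} := Nat.card_eq_fintype_card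
      _ ≤ Fintype.card (Fin 0 → Bool) := Fintype.card_subtype_le _
      _ = 1 := by simp
  | succ k ih =>
    intro g hg
    refine le_trans (Ncard_succ g) ?_
    have h1 : Ncard (fun j => g j.succ) ≤ k + 1 := ih _ (fun j => hg j.succ)
    have h2 : Nat.card {ε : Fin k → Bool // ∃ x ∈ sregion (fun j => g j.succ) ε,
        ∃ y ∈ sregion (fun j => g j.succ) ε, 0 < g 0 x ∧ g 0 y < 0} ≤ 1 := by
      classical
      rw [Nat.card_eq_fintype_card, Fintype.card_le_one_iff_subsingleton]
      constructor
      rintro ⟨ε₁, x₁, hx₁, y₁, hy₁, hgx₁, hgy₁⟩ ⟨ε₂, x₂, hx₂, y₂, hy₂, hgx₂, hgy₂⟩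
      obtain ⟨α, β, hαβ⟩ := hg 0
      have haff : ∀ (u : F) (x y : F), g 0 ((1-u) • x + u • y) = (1-u) * g 0 x + u * g 0 y := by
        intro u x y; simp only [hαβ, smul_eq_mul]; ring
      have hconv : ∀ ε : Fin k → Bool, Convex F (sregion (fun j => g j.succ) ε) := by
        intro ε
        refine convex_sregion _ (fun j u x y => ?_) ε
        obtain ⟨α', β', h'⟩ := hg j.succ
        simp only [h', smul_eq_mul]; ring
      obtain ⟨r₁, hr₁, hr₁0⟩ := exists_zero_of_convex (hconv ε₁) (g 0) haff hx₁ hy₁ hgx₁ hgy₁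
      obtain ⟨r₂, hr₂, hr₂0⟩ := exists_zero_of_convex (hconv ε₂) (g 0) haff hx₂ hy₂ hgx₂ hgy₂
      have hα : α ≠ 0 := by
        intro h0
        rw [hαβ, h0, zero_mul, zero_add] at hgx₁ hgy₁
        linarith
      have hreq : r₁ = r₂ := by
        rw [hαβ] at hr₁0 hr₂0
        have : α * r₁ = α * r₂ := by linarith
        exact mul_left_cancel₀ hα this
      apply Subtype.ext
      funext j
      show ε₁ j = ε₂ j
      have h1 := hr₁ j
      have h2 := hr₂ j
      rw [hreq] at h1
      rcases Bool.eq_false_or_eq_true (ε₁ j) with hb | hb <;>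
        rcases Bool.eq_false_or_eq_true (ε₂ j) with hb' | hb' <;>
        rw [hb, hb'] <;> rw [hb] at h1 <;> rw [hb'] at h2 <;>
        simp at h1 h2 ⊢ <;> linarith
    omega


lemma arrLine_affine {m : ℕ} (a b c : Fin m → F) (i : Fin m) (u : F) (x y : F × F) :
    arrLine a b c i ((1-u) • x + u • y)
      = (1-u) * arrLine a b c i x + u * arrLine a b c i y := by
  simp only [arrLine, Prod.fst_add, Prod.snd_add, Prod.smul_fst, Prod.smul_snd, smul_eq_mul]
  ring

lemma split_card_le {m : ℕ} (a b c : Fin (m+1) → F) (hnd0 : (a 0, b 0) ≠ ((0:F), (0:F))) :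
    Nat.card {ε : Fin m → Bool // ∃ x ∈ sregion (fun j => arrLine a b c j.succ) ε,
      ∃ y ∈ sregion (fun j => arrLine a b c j.succ) ε,
      0 < arrLine a b c 0 x ∧ arrLine a b c 0 y < 0} ≤ m + 1 := by
  obtain ⟨p0, hp0⟩ : ∃ p0 : F × F, ∀ z : F × F, arrLine a b c 0 z = 0 →
      ∃ t : F, z = p0 + t • ((-(b 0), a 0) : F × F) := by
    by_cases ha : a 0 = 0
    · have hb : b 0 ≠ 0 := by
        intro hb; exact hnd0 (by rw [ha, hb])
      refine ⟨((0:F), c 0 / b 0), fun z hz => ⟨-(z.1 / b 0), ?_⟩⟩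
      simp only [arrLine, ha, zero_mul, zero_add] at hz
      have h2 : z.2 = c 0 / b 0 := by field_simp; linarith
      rw [Prod.ext_iff]
      constructor
      · simp only [Prod.fst_add, Prod.smul_fst, smul_eq_mul, ha]
        field_simp
        ring
      · simp only [Prod.snd_add, Prod.smul_snd, smul_eq_mul, ha, mul_zero, add_zero, h2]
    · refine ⟨(c 0 / a 0, (0:F)), fun z hz => ⟨z.2 / a 0, ?_⟩⟩
      simp only [arrLine] at hz
      rw [Prod.ext_iff]
      constructor
      · simp only [Prod.fst_add, Prod.smul_fst, smul_eq_mul]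
        field_simp
        linarith
      · simp only [Prod.snd_add, Prod.smul_snd, smul_eq_mul, zero_add]
        field_simp
  have key := Ncard_affine_le m
    (fun j t => arrLine a b c j.succ (p0 + t • ((-(b 0), a 0) : F × F)))
    (fun j => ⟨a j.succ * (-(b 0)) + b j.succ * (a 0), arrLine a b c j.succ p0, fun t => by
      simp only [arrLine, Prod.fst_add, Prod.snd_add, Prod.smul_fst, Prod.smul_snd, smul_eq_mul]
      ring⟩)
  refine le_trans (natCard_subtype_mono ?_) key
  rintro ε ⟨x, hx, y, hy, hgx, hgy⟩
  have hconv : Convex F (sregion (fun j => arrLine a b c j.succ) ε) :=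
    convex_sregion _ (fun j u p q => arrLine_affine a b c j.succ u p q) ε
  obtain ⟨z, hz, hz0⟩ := exists_zero_of_convex hconv (arrLine a b c 0)
    (fun u p q => arrLine_affine a b c 0 u p q) hx hy hgx hgy
  obtain ⟨t, ht⟩ := hp0 z hz0
  exact ⟨t, fun j => by have := hz j; rw [ht] at this; exact this⟩

lemma two_mul_Ncard_le : ∀ (m : ℕ) (a b c : Fin m → F), (∀ i, (a i, b i) ≠ (0,0)) →
    2 * Ncard (arrLine a b c) ≤ m * m + m + 2 := by
  intro m
  induction m with
  | zero =>
    intro a b c _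
    classical
    have : Ncard (arrLine a b c) ≤ 1 := by
      unfold Ncard
      calc Nat.card {ε : Fin 0 → Bool // (sregion (arrLine a b c) ε).Nonempty}
          = Fintype.card {ε : Fin 0 → Bool // (sregion (arrLine a b c) ε).Nonempty} :=
            Nat.card_eq_fintype_card
        _ ≤ Fintype.card (Fin 0 → Bool) := Fintype.card_subtype_le _
        _ = 1 := by simp
    omega
  | succ m ih =>
    intro a b c hnd
    have step := Ncard_succ (arrLine a b c)
    have h1 : 2 * Ncard (fun j => arrLine a b c j.succ) ≤ m * m + m + 2 :=
      ih (fun j => a j.succ) (fun j => b j.succ) (fun j => c j.succ) (fun i => hnd i.succ)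
    have h2 := split_card_le a b c (hnd 0)
    have hm : (m+1)*(m+1) + (m+1) + 2 = (m*m+m+2) + 2*(m+1) := by ring
    omega


lemma arrLine_zero_on_line {m : ℕ} (a b c : Fin m → F) (j : Fin m) {p q : F × F}
    (hp : arrLine a b c j p = 0) (hq : arrLine a b c j q = 0) (t : F) :
    arrLine a b c j (p + t • (q - p)) = 0 := by
  simp only [arrLine, Prod.fst_add, Prod.snd_add, Prod.smul_fst, Prod.smul_snd,
    Prod.fst_sub, Prod.snd_sub, smul_eq_mul] at *
  linear_combination (1-t)*hp + t*hq

lemma zeroset_subset {aL bL cL : F} (hnd : (aL, bL) ≠ ((0:F),(0:F))) {p q : F × F} (hpq : p ≠ q)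
    (hp : aL * p.1 + bL * p.2 - cL = 0) (hq : aL * q.1 + bL * q.2 - cL = 0)
    {z : F × F} (hz : aL * z.1 + bL * z.2 - cL = 0) : ∃ t : F, z = p + t • (q - p) := by
  have hA : aL * (q.1 - p.1) + bL * (q.2 - p.2) = 0 := by linear_combination hq - hp
  have hB : aL * (z.1 - p.1) + bL * (z.2 - p.2) = 0 := by linear_combination hz - hp
  by_cases ha : aL = 0
  · have hb : bL ≠ 0 := fun h => hnd (by rw [ha, h])
    have hq2 : q.2 = p.2 := by
      rw [ha] at hA
      have : bL * (q.2 - p.2) = 0 := by linarith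
      rcases mul_eq_zero.mp this with h | h
      · exact absurd h hb
      · linarith
    have hz2 : z.2 = p.2 := by
      rw [ha] at hB
      have : bL * (z.2 - p.2) = 0 := by linarith
      rcases mul_eq_zero.mp this with h | h
      · exact absurd h hb
      · linarith
    have hq1 : q.1 - p.1 ≠ 0 := by
      intro h
      exact hpq (Prod.ext (by linarith) hq2).symm
    refine ⟨(z.1 - p.1)/(q.1 - p.1), ?_⟩
    rw [Prod.ext_iff]
    constructor
    · simp only [Prod.fst_add, Prod.smul_fst, Prod.fst_sub, smul_eq_mul]
      field_simp
      ring
    · simp only [Prod.snd_add, Prod.smul_snd, Prod.snd_sub, smul_eq_mul, hq2]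
      simp [hz2]
  · have hq2 : q.2 - p.2 ≠ 0 := by
      intro h
      apply hpq
      have h1 : aL * (q.1 - p.1) = 0 := by rw [h] at hA; linarith
      rcases mul_eq_zero.mp h1 with h' | h'
      · exact absurd h' ha
      · exact (Prod.ext (by linarith) (by linarith)).symm
    set t : F := (z.2 - p.2)/(q.2 - p.2) with htdef
    have ht2 : t * (q.2 - p.2) = z.2 - p.2 := div_mul_cancel₀ _ hq2
    refine ⟨t, ?_⟩
    rw [Prod.ext_iff]
    constructor
    · simp only [Prod.fst_add, Prod.smul_fst, Prod.fst_sub, smul_eq_mul]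
      have key : aL * ((q.2 - p.2) * (p.1 + t * (q.1 - p.1)))
          = aL * ((q.2 - p.2) * z.1) := by
        linear_combination (aL*(q.1-p.1)) * ht2 + (z.2-p.2) * hA - (q.2-p.2) * hB
      have := mul_left_cancel₀ ha key
      have := mul_left_cancel₀ hq2 this
      linarith
    · simp only [Prod.snd_add, Prod.smul_snd, Prod.snd_sub, smul_eq_mul]
      linarith [ht2]

theorem count_regions_of_lines_generated_by_points'
    (n : ℕ) (hn : 1 ≤ n)
    (S : Finset (F × F)) (hS : S.card = n)
    (m : ℕ) (a b c : Fin m → F)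
    (hnd : ∀ i : Fin m, (a i, b i) ≠ (0, 0))
    (hdistinct : ∀ i j : Fin m,
      {p : F × F | arrLine a b c i p = 0} = {p : F × F | arrLine a b c j p = 0} → i = j)
    (hthrough : ∀ i : Fin m, ∃ p ∈ S, ∃ q ∈ S, p ≠ q ∧
      arrLine a b c i p = 0 ∧ arrLine a b c i q = 0)
    (hall : ∀ p ∈ S, ∀ q ∈ S, p ≠ q →
      ∃ i : Fin m, arrLine a b c i p = 0 ∧ arrLine a b c i q = 0) :
    (8 * Nat.card {ε : Fin m → Bool // (arrRegion a b c ε).Nonempty} : ℤ)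
      ≤ (n : ℤ) ^ 4 - 2 * (n : ℤ) ^ 3 + 3 * (n : ℤ) ^ 2 - 2 * (n : ℤ) + 8 := by
  classical
  -- the two distinguished points on each line, and uniqueness of a line through 2 points
  choose P hP Q hQ hPQ hfP hfQ using hthrough
  have key : ∀ i j : Fin m, arrLine a b c j (P i) = 0 → arrLine a b c j (Q i) = 0 → i = j := by
    intro i j hp hq
    apply hdistinct
    ext z
    simp only [Set.mem_setOf_eq]
    constructor
    · intro hz
      obtain ⟨t, ht⟩ := zeroset_subset (hnd i) (hPQ i) (hfP i) (hfQ i) hz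
      rw [ht]
      exact arrLine_zero_on_line a b c j hp hq t
    · intro hz
      obtain ⟨t, ht⟩ := zeroset_subset (hnd j) (hPQ i) hp hq hz
      rw [ht]
      exact arrLine_zero_on_line a b c i (hfP i) (hfQ i) t
  -- the number of lines is at most `n.choose 2`
  have hm : m ≤ n.choose 2 := by
    have hmem : ∀ i : Fin m, ({P i, Q i} : Finset (F × F)) ∈ S.powersetCard 2 := by
      intro i
      rw [Finset.mem_powersetCard]
      refine ⟨?_, Finset.card_pair (hPQ i)⟩
      intro x hx
      rcases Finset.mem_insert.mp hx with h | h
      · exact h ▸ hP i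
      · exact (Finset.mem_singleton.mp h) ▸ hQ i
    have hinj : ∀ i ∈ (Finset.univ : Finset (Fin m)), ∀ j ∈ (Finset.univ : Finset (Fin m)),
        ({P i, Q i} : Finset (F × F)) = {P j, Q j} → i = j := by
      intro i _ j _ h
      have hPi : P i ∈ ({P j, Q j} : Finset (F × F)) := h ▸ Finset.mem_insert_self _ _
      have hQi : Q i ∈ ({P j, Q j} : Finset (F × F)) := h ▸ Finset.mem_insert_of_mem
        (Finset.mem_singleton_self _)
      have h1 : arrLine a b c j (P i) = 0 := by
        rcases Finset.mem_insert.mp hPi with h' | h'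
        · rw [h']; exact hfP j
        · rw [Finset.mem_singleton.mp h']; exact hfQ j
      have h2 : arrLine a b c j (Q i) = 0 := by
        rcases Finset.mem_insert.mp hQi with h' | h'
        · rw [h']; exact hfP j
        · rw [Finset.mem_singleton.mp h']; exact hfQ j
      exact key i j h1 h2
    calc m = (Finset.univ : Finset (Fin m)).card := by simp
      _ ≤ (S.powersetCard 2).card :=
          Finset.card_le_card_of_injOn (fun i => ({P i, Q i} : Finset (F × F)))
            (fun i _ => hmem i) (fun i hi j hj h => hinj i hi j hj h)
      _ = n.choose 2 := by rw [Finset.card_powersetCard, hS]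
  -- the arrangement bound
  have harr : 2 * Nat.card {ε : Fin m → Bool // (arrRegion a b c ε).Nonempty}
      ≤ m * m + m + 2 := two_mul_Ncard_le m a b c hnd
  -- arithmetic
  have hc2 : 2 * Nat.choose n 2 = n * (n - 1) := by
    obtain ⟨k, rfl⟩ : ∃ k, n = k + 1 := ⟨n - 1, (Nat.succ_pred_eq_of_pos hn).symm⟩
    rw [Nat.choose_two_right]
    simp only [Nat.add_sub_cancel]
    have hdvd : 2 ∣ (k + 1) * k := by
      rcases Nat.even_or_odd k with h | h
      · exact Dvd.dvd.mul_left h.two_dvd _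
      · exact Dvd.dvd.mul_right (Odd.add_one h).two_dvd _
    rw [Nat.mul_div_cancel' hdvd]
  set N := Nat.card {ε : Fin m → Bool // (arrRegion a b c ε).Nonempty} with hN
  set M := n.choose 2 with hM
  have h1 : (2 * N : ℤ) ≤ (m : ℤ) * m + m + 2 := by exact_mod_cast harr
  have h2 : (m : ℤ) ≤ (M : ℤ) := by exact_mod_cast hm
  have h3 : (2 * M : ℤ) = (n : ℤ) ^ 2 - n := by
    have := congrArg (Nat.cast (R := ℤ)) hc2
    push_cast [Nat.cast_sub hn] at this
    rw [this]; ring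
  have h4 : (0 : ℤ) ≤ (m : ℤ) := Int.natCast_nonneg m
  have h5 : (0 : ℤ) ≤ (M : ℤ) := Int.natCast_nonneg M
  have hmm : (m : ℤ) * m ≤ (M : ℤ) * M := mul_le_mul h2 h2 h4 h5
  have h6 : (2 * M : ℤ) * (2 * M) = ((n : ℤ) ^ 2 - n) * ((n : ℤ) ^ 2 - n) := by rw [h3]
  nlinarith [h1, h2, h3, hmm, h6]

end

/-- The set of lines generated by `n` points of the plane (all lines through at least
two of the points) has at most `(n⁴ - 2n³ + 3n² - 2n + 8)/8` regions. -/
theorem count_regions_of_lines_generated_by_points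
    {F : Type*} [Field F] [LinearOrder F] [IsStrictOrderedRing F] (n : ℕ) (hn : 1 ≤ n)
    (S : Finset (F × F)) (hS : S.card = n)
    (m : ℕ) (a b c : Fin m → F)
    (hnd : ∀ i : Fin m, (a i, b i) ≠ (0, 0))
    (hdistinct : ∀ i j : Fin m,
      {p : F × F | arrLine a b c i p = 0} = {p : F × F | arrLine a b c j p = 0} → i = j)
    (hthrough : ∀ i : Fin m, ∃ p ∈ S, ∃ q ∈ S, p ≠ q ∧
      arrLine a b c i p = 0 ∧ arrLine a b c i q = 0)
    (hall : ∀ p ∈ S, ∀ q ∈ S, p ≠ q →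
      ∃ i : Fin m, arrLine a b c i p = 0 ∧ arrLine a b c i q = 0) :
    (8 * Nat.card {ε : Fin m → Bool // (arrRegion a b c ε).Nonempty} : ℤ)
      ≤ (n : ℤ) ^ 4 - 2 * (n : ℤ) ^ 3 + 3 * (n : ℤ) ^ 2 - 2 * (n : ℤ) + 8 := by
  exact count_regions_of_lines_generated_by_points' n hn S hS m a b c hnd hdistinct
    hthrough hall
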